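/- Let k ≥ 2 be an even integer and χ a real non-principal Dirichlet character modulo q. For every complex number s with Re(s) > 1, ∑_{n=1}^{∞} μ^(k)(n)·g_χ(n)·n^{−s} = L(s, χ) · (∏_{p ∣ q} (1 − p^{−s})^{−1}) / ζ(ks), where ζ is the Riemann zeta function and L(s,χ) is the Dirichlet L-function of χ. -/

import Mathlib

open Complex Finset
open scoped Classical

/-- Even case Euler factorization: for `Re(s) > 1`,
`∑ μ^(k)(n) g_χ(n) n^{-s} = L(s,χ) · P(s) / ζ(ks)` with `P(s) = ∏_{p ∣ q} (1 - p^{-s})⁻¹`. -/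
theorem dirichlet_series_factorization_even
    (k : ℕ) (hk : 2 ≤ k) (hkeven : Even k)
    (q : ℕ) [NeZero q] (χ : DirichletCharacter ℂ q)
    (hχreal : ∀ n : ZMod q, χ n = -1 ∨ χ n = 0 ∨ χ n = 1) (hχ : χ ≠ 1)
    (g : ℕ → ℂ) (hg1 : g 1 = 1)
    (hgmul : ∀ m n : ℕ, g (m * n) = g m * g n)
    (hgp : ∀ p : ℕ, p.Prime → g p = if p ∣ q then 1 else χ (p : ZMod q))
    (f : ℕ → ℂ)
    (hf : ∀ n : ℕ, f n = if ∀ p : ℕ, p.Prime → ¬ p ^ k ∣ n then g n else 0) :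
    ∀ s : ℂ, 1 < s.re →
      ∑' n : ℕ, f n * (n : ℂ) ^ (-s)
        = DirichletCharacter.LFunction χ s
            * (∏ p ∈ q.primeFactors, (1 - (p : ℂ) ^ (-s))⁻¹)
            / riemannZeta ((k : ℂ) * s) := by
  intro s hs
  have hq : q ≠ 0 := NeZero.ne q
  have hs0 : s ≠ 0 := ne_zero_of_one_lt_re hs
  -- norm of p^(-z) is < 1 for primes p and Re z > 0
  have hnorm : ∀ z : ℂ, 0 < z.re → ∀ p : ℕ, 2 ≤ p → ‖(p : ℂ) ^ (-z)‖ < 1 := by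
    intro z hz p hp
    rw [norm_natCast_cpow_of_pos (by omega), neg_re]
    calc (p : ℝ) ^ (-z.re) < (p : ℝ) ^ (0 : ℝ) :=
          Real.rpow_lt_rpow_of_exponent_lt (by exact_mod_cast hp) (by linarith)
      _ = 1 := Real.rpow_zero _
  -- values of g at primes
  have hgpm : ∀ p : ℕ, p.Prime → g p = 1 ∨ g p = -1 := by
    intro p pp
    rw [hgp p pp]
    split_ifs with h
    · exact Or.inl rfl
    · have hu : IsUnit ((p : ZMod q)) := by
        rw [ZMod.isUnit_iff_coprime]
        exact (Nat.Prime.coprime_iff_not_dvd pp).mpr h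
      have hne : χ (p : ZMod q) ≠ 0 := by
        have h1 : χ (p : ZMod q) * χ ((hu.unit⁻¹ : (ZMod q)ˣ) : ZMod q) = 1 := by
          rw [← map_mul, IsUnit.mul_val_inv, map_one]
        exact left_ne_zero_of_mul_eq_one h1
      rcases hχreal (p : ZMod q) with h1 | h1 | h1
      · exact Or.inr h1
      · exact absurd h1 hne
      · exact Or.inl h1
  -- norm bound on g
  have hgnorm : ∀ n : ℕ, ‖g n‖ ≤ 1 := by
    intro n
    induction n using Nat.strong_induction_on with
    | _ n ih =>
      match n with
      | 0 =>
        have h0 : g 0 = g 0 * g 0 := by simpa using hgmul 0 0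
        have h0' : g 0 * (g 0 - 1) = 0 := by linear_combination -h0
        rcases mul_eq_zero.mp h0' with h | h
        · simp [h]
        · have : g 0 = 1 := by linear_combination h
          simp [this]
      | 1 => simp [hg1]
      | (m + 2) =>
        have h2 : 2 ≤ m + 2 := by omega
        have pp : (m + 2).minFac.Prime := Nat.minFac_prime (by omega)
        have hdvd : (m + 2).minFac ∣ (m + 2) := Nat.minFac_dvd _
        have heq : (m + 2).minFac * ((m + 2) / (m + 2).minFac) = m + 2 :=
          Nat.mul_div_cancel' hdvd
        have hlt : (m + 2) / (m + 2).minFac < m + 2 :=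
          Nat.div_lt_self (by omega) pp.two_le
        have hgle : ‖g (m + 2).minFac‖ = 1 := by
          rcases hgpm _ pp with h | h <;> simp [h]
        calc ‖g (m + 2)‖
            = ‖g (m + 2).minFac‖ * ‖g ((m + 2) / (m + 2).minFac)‖ := by
              conv_lhs => rw [← heq, hgmul, norm_mul]
          _ ≤ 1 * 1 :=
              mul_le_mul (le_of_eq hgle) (ih _ hlt) (norm_nonneg _) (by norm_num)
          _ = 1 := one_mul 1
  -- powers of g at primes
  have hgpow : ∀ p e : ℕ, g (p ^ e) = (g p) ^ e := by
    intro p e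
    induction e with
    | zero => simpa using hg1
    | succ e ih => rw [pow_succ, pow_succ, ← ih, ← hgmul]
  -- basic facts about f
  have hf0 : f 0 = 0 := by
    rw [hf, if_neg]
    push_neg
    exact ⟨2, Nat.prime_two, dvd_zero _⟩
  have hf1 : f 1 = 1 := by
    rw [hf, if_pos, hg1]
    intro p pp hdvd
    have h1 := Nat.le_of_dvd one_pos hdvd
    have h2 : 2 ^ k ≤ p ^ k := Nat.pow_le_pow_left pp.two_le k
    have h3 : 2 < 2 ^ k := by
      calc 2 < 2 ^ 2 := by norm_num
        _ ≤ 2 ^ k := Nat.pow_le_pow_right (by norm_num) hk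
    omega
  have hfnorm : ∀ n : ℕ, ‖f n‖ ≤ 1 := by
    intro n
    rw [hf]
    split_ifs
    · exact hgnorm n
    · simp
  -- multiplicativity of f on coprime arguments
  have hfmul : ∀ {m n : ℕ}, Nat.Coprime m n → f (m * n) = f m * f n := by
    intro m n hmn
    by_cases H : ∀ p : ℕ, p.Prime → ¬ p ^ k ∣ m * n
    · have Hm : ∀ p : ℕ, p.Prime → ¬ p ^ k ∣ m :=
        fun p pp hd => H p pp (hd.trans (Dvd.intro n rfl))
      have Hn : ∀ p : ℕ, p.Prime → ¬ p ^ k ∣ n :=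
        fun p pp hd => H p pp (hd.trans (Dvd.intro_left m rfl))
      rw [hf (m * n), if_pos H, hf m, if_pos Hm, hf n, if_pos Hn, hgmul]
    · push_neg at H
      obtain ⟨p, pp, hd⟩ := H
      rw [hf (m * n), if_neg (by push_neg; exact ⟨p, pp, hd⟩)]
      have hpd : p ∣ m * n := dvd_trans (dvd_pow_self p (by omega : k ≠ 0)) hd
      rcases (Nat.Prime.dvd_mul pp).mp hpd with hpm | hpn
      · have hcop : Nat.Coprime (p ^ k) n :=
          Nat.Coprime.pow_left k (Nat.Coprime.coprime_dvd_left hpm hmn)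
        have hdm : p ^ k ∣ m := hcop.dvd_of_dvd_mul_right hd
        rw [hf m, if_neg (by push_neg; exact ⟨p, pp, hdm⟩), zero_mul]
      · have hcop : Nat.Coprime (p ^ k) m :=
          Nat.Coprime.pow_left k (Nat.Coprime.coprime_dvd_left hpn hmn.symm)
        have hdn : p ^ k ∣ n := hcop.dvd_of_dvd_mul_left hd
        rw [hf n, if_neg (by push_neg; exact ⟨p, pp, hdn⟩), mul_zero]
  -- the full summand
  set F : ℕ → ℂ := fun n => f n * (n : ℂ) ^ (-s) with hF
  have hF1 : F 1 = 1 := by simp [hF, hf1]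
  have hF0 : F 0 = 0 := by simp [hF, hf0]
  have hFmul : ∀ {m n : ℕ}, Nat.Coprime m n → F (m * n) = F m * F n := by
    intro m n hmn
    have hcast : ((m : ℂ) * (n : ℂ)) ^ (-s) = (m : ℂ) ^ (-s) * (n : ℂ) ^ (-s) := by
      simpa only [ofReal_natCast] using
        mul_cpow_ofReal_nonneg m.cast_nonneg n.cast_nonneg (-s)
    simp only [hF, hfmul hmn]
    push_cast
    rw [hcast]
    ring
  have hsum : Summable (fun n => ‖F n‖) := by
    apply Summable.of_nonneg_of_le (fun n => norm_nonneg _) ?_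
      (summable_riemannZetaSummand hs)
    intro n
    calc ‖F n‖ = ‖f n‖ * ‖(n : ℂ) ^ (-s)‖ := norm_mul _ _
      _ ≤ 1 * ‖(n : ℂ) ^ (-s)‖ := by
          gcongr
          exact hfnorm n
      _ = ‖riemannZetaSummandHom (ne_zero_of_one_lt_re hs) n‖ := by
          rw [one_mul]; rfl
  -- the Euler product for F
  have hE : HasProd (fun p : Nat.Primes => ∑' e : ℕ, F ((p : ℕ) ^ e)) (∑' n, F n) :=
    EulerProduct.eulerProduct_hasProd hF1 hFmul hsum hF0
  -- evaluation of the Euler factors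
  have hks : 1 < ((k : ℂ) * s).re := by
    have hre : ((k : ℂ) * s).re = (k : ℝ) * s.re := by
      simp [Complex.mul_re]
    rw [hre]
    have hk2 : (2 : ℝ) ≤ (k : ℝ) := by exact_mod_cast hk
    nlinarith
  have hEfac : ∀ p : Nat.Primes,
      (∑' e : ℕ, F ((p : ℕ) ^ e))
        = (1 - ((p : ℕ) : ℂ) ^ (-((k : ℂ) * s))) * (1 - g (p : ℕ) * ((p : ℕ) : ℂ) ^ (-s))⁻¹ := by
    rintro ⟨p, pp⟩
    show (∑' e : ℕ, F (p ^ e)) = (1 - (p : ℂ) ^ (-((k : ℂ) * s))) * (1 - g p * (p : ℂ) ^ (-s))⁻¹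
    set x : ℂ := g p * (p : ℂ) ^ (-s) with hxdef
    have hgp1 : ‖g p‖ = 1 := by rcases hgpm p pp with h | h <;> simp [h]
    have hxnorm : ‖x‖ < 1 := by
      rw [hxdef, norm_mul, hgp1, one_mul]
      exact hnorm s (by linarith) p pp.two_le
    have hx1 : x ≠ 1 := by
      intro h
      rw [h] at hxnorm
      simp at hxnorm
    have hxk : x ^ k = (p : ℂ) ^ (-((k : ℂ) * s)) := by
      have hgk : (g p) ^ k = 1 := by
        rcases hgpm p pp with h | h
        · simp [h]
        · rw [h]; exact hkeven.neg_one_pow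
      rw [hxdef, mul_pow, hgk, one_mul, ← Complex.cpow_nat_mul, mul_neg]
    have hterm : ∀ e : ℕ, F (p ^ e) = if e < k then x ^ e else 0 := by
      intro e
      have hcast : ((p ^ e : ℕ) : ℂ) ^ (-s) = ((p : ℂ) ^ (-s)) ^ e := by
        push_cast
        rw [← Complex.natCast_cpow_natCast_mul, Complex.cpow_nat_mul]
      by_cases he : e < k
      · rw [if_pos he]
        show f (p ^ e) * ((p ^ e : ℕ) : ℂ) ^ (-s) = x ^ e
        rw [hf, if_pos, hgpow, hcast, hxdef, mul_pow]
        intro r rp hr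
        have hrp : r ∣ p ^ e := dvd_trans (dvd_pow_self r (by omega)) hr
        have hrpeq : r = p := (Nat.prime_dvd_prime_iff_eq rp pp).mp (rp.dvd_of_dvd_pow hrp)
        subst hrpeq
        have := (Nat.pow_dvd_pow_iff_le_right (Nat.Prime.one_lt rp)).mp hr
        omega
      · rw [if_neg he]
        show f (p ^ e) * ((p ^ e : ℕ) : ℂ) ^ (-s) = 0
        rw [hf, if_neg, zero_mul]
        push_neg
        exact ⟨p, pp, pow_dvd_pow p (by omega)⟩
    rw [tsum_congr hterm,
      tsum_eq_sum (s := Finset.range k) (fun e he => if_neg (by simpa using he)),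
      Finset.sum_congr rfl (fun e he => if_pos (Finset.mem_range.mp he)),
      geom_sum_eq hx1, hxk, ← neg_sub (1 : ℂ) ((p : ℂ) ^ (-((k : ℂ) * s))),
      ← neg_sub (1 : ℂ) x, neg_div_neg_eq, div_eq_mul_inv]
  -- Euler products for ζ(ks), L(s,χ) and the finite correction product
  have hZ : HasProd (fun p : Nat.Primes => (1 - ((p : ℕ) : ℂ) ^ (-((k : ℂ) * s)))⁻¹)
      (riemannZeta ((k : ℂ) * s)) := riemannZeta_eulerProduct_hasProd hks
  have hA := DirichletCharacter.LSeries_eulerProduct_hasProd χ hs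
  have hC : HasProd
      (fun p : Nat.Primes => if (p : ℕ) ∣ q then (1 - ((p : ℕ) : ℂ) ^ (-s))⁻¹ else 1)
      (∏ p ∈ q.primeFactors, (1 - (p : ℂ) ^ (-s))⁻¹) := by
    have h1 : ∀ p : Nat.Primes, p ∉ q.primeFactors.subtype Nat.Prime →
        (if (p : ℕ) ∣ q then (1 - ((p : ℕ) : ℂ) ^ (-s))⁻¹ else 1) = 1 := by
      intro p hp
      rw [if_neg]
      intro hdvd
      exact hp (Finset.mem_subtype.mpr (Nat.mem_primeFactors.mpr ⟨p.2, hdvd, hq⟩))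
    have h2 : HasProd _ _ := hasProd_prod_of_ne_finset_one h1
    convert h2 using 1
    rw [← Finset.prod_subtype_of_mem (fun n : ℕ => (1 - (n : ℂ) ^ (-s))⁻¹)
      (fun _ h => Nat.prime_of_mem_primeFactors h) (s := q.primeFactors)]
    refine (Finset.prod_congr rfl fun p hp => ?_).symm
    rw [if_pos (Nat.dvd_of_mem_primeFactors (Finset.mem_subtype.mp hp))]
  -- nonvanishing of the zeta factors
  have hone : ∀ p : Nat.Primes, (1 : ℂ) - ((p : ℕ) : ℂ) ^ (-((k : ℂ) * s)) ≠ 0 := by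
    intro p h
    have h2 := hnorm ((k : ℂ) * s) (by linarith) p p.2.two_le
    rw [sub_eq_zero] at h
    rw [← h] at h2
    simp at h2
  -- combine the Euler products
  have hEZ := hE.mul hZ
  have hAC := hA.mul hC
  have hfuneq : (fun p : Nat.Primes =>
      (∑' e : ℕ, F ((p : ℕ) ^ e)) * (1 - ((p : ℕ) : ℂ) ^ (-((k : ℂ) * s)))⁻¹)
      = fun p : Nat.Primes =>
        (1 - χ ((p : ℕ) : ZMod q) * ((p : ℕ) : ℂ) ^ (-s))⁻¹
          * (if (p : ℕ) ∣ q then (1 - ((p : ℕ) : ℂ) ^ (-s))⁻¹ else 1) := by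
    funext p
    rw [hEfac p, mul_comm (1 - ((p : ℕ) : ℂ) ^ (-((k : ℂ) * s))), mul_assoc,
      mul_inv_cancel₀ (hone p), mul_one]
    by_cases hpq : (p : ℕ) ∣ q
    · have hχ0 : χ (((p : ℕ)) : ZMod q) = 0 := by
        apply MulChar.map_nonunit
        rw [ZMod.isUnit_iff_coprime]
        exact fun hc => ((Nat.Prime.coprime_iff_not_dvd p.2).mp hc) hpq
      have hgp1 : g (p : ℕ) = 1 := by rw [hgp _ p.2, if_pos hpq]
      rw [if_pos hpq, hχ0, hgp1, one_mul, zero_mul, sub_zero, inv_one, one_mul]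
    · have hgp1 : g (p : ℕ) = χ (((p : ℕ)) : ZMod q) := by rw [hgp _ p.2, if_neg hpq]
      rw [if_neg hpq, hgp1, mul_one]
  have hmain : (∑' n, F n) * riemannZeta ((k : ℂ) * s)
      = LSeries (fun n => χ n) s * ∏ p ∈ q.primeFactors, (1 - (p : ℂ) ^ (-s))⁻¹ :=
    hEZ.unique (hfuneq ▸ hAC)
  rw [DirichletCharacter.LFunction_eq_LSeries χ hs,
    eq_div_iff (riemannZeta_ne_zero_of_one_lt_re hks)]
  exact hmain
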